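/- If ≤ is a total ordering of X compatible with a closure system (X, φ) (meaning every down-set of (X, ≤) is φ-closed), then the family Id(X, ≤) of down-sets of (X, ≤) is a maximal chain in the lattice of φ-closed sets. -/
import Mathlib

/-- φ is a closure operator: extensive, monotone, idempotent. -/
def IsClosureOp {X : Type*} (φ : Set X → Set X) : Prop :=
  (∀ A, A ⊆ φ A) ∧ (∀ A B, A ⊆ B → φ A ⊆ φ B) ∧ (∀ A, φ (φ A) = φ A)

/-- φ is algebraic (finitary): the closure of a set is the union of closures of its
finite subsets. -/
def IsAlgebraicOp {X : Type*} (φ : Set X → Set X) : Prop :=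
  ∀ A, φ A = ⋃₀ {T | ∃ B, B ⊆ A ∧ B.Finite ∧ T = φ B}

/-- The anti-exchange property. -/
def AntiExchange {X : Type*} (φ : Set X → Set X) : Prop :=
  ∀ (x y : X) (A : Set X), x ≠ y → φ A = A → x ∉ A →
    x ∈ φ (A ∪ {y}) → y ∉ φ (A ∪ {x})

/-- A convex geometry: a zero-closure operator with the anti-exchange property. -/
def IsConvexGeometry {X : Type*} (φ : Set X → Set X) : Prop :=
  IsClosureOp φ ∧ φ ∅ = ∅ ∧ AntiExchange φ

/-- An algebraic convex geometry. -/
def IsAlgConvexGeometry {X : Type*} (φ : Set X → Set X) : Prop :=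
  IsClosureOp φ ∧ IsAlgebraicOp φ ∧ φ ∅ = ∅ ∧ AntiExchange φ

/-- An algebraic subset of Pow X : closed under arbitrary intersections
(with ⋂₀ ∅ = X) and under unions of nonempty up-directed subfamilies. -/
def IsAlgSubset {X : Type*} (F : Set (Set X)) : Prop :=
  (∀ S ⊆ F, ⋂₀ S ∈ F) ∧
  (∀ S ⊆ F, S.Nonempty → (∀ A ∈ S, ∀ B ∈ S, ∃ C ∈ S, A ∪ B ⊆ C) → ⋃₀ S ∈ F)

/-- A maximal chain in the lattice of φ-closed sets. -/
def IsMaxChainOfClosed {X : Type*} (φ : Set X → Set X) (C : Set (Set X)) : Prop :=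
  C ⊆ {Y | φ Y = Y} ∧ IsChain (· ⊆ ·) C ∧
  ∀ T, φ T = T → (∀ A ∈ C, T ⊆ A ∨ A ⊆ T) → T ∈ C

/-- If a total (linear) order on X is compatible with a closure system (every
down-set is closed), then the family of down-sets is a maximal chain in the lattice
of closed sets. -/
theorem stmt13 {X : Type*} [LinearOrder X] (φ : Set X → Set X)
    (hclo : IsClosureOp φ) (hcomp : ∀ A : Set X, IsLowerSet A → φ A = A) :
    IsMaxChainOfClosed φ {A : Set X | IsLowerSet A} := by
  refine ⟨fun A hA => hcomp A hA, ?_, ?_⟩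
  · intro A hA B hB _
    by_cases h : A ⊆ B
    · exact Or.inl h
    · obtain ⟨a, haA, haB⟩ := Set.not_subset.mp h
      refine Or.inr fun b hbB => hA ?_ haA
      rcases le_total b a with h' | h'
      · exact h'
      · exact absurd (hB h' hbB) haB
  · intro T _ hcmp a b hba haT
    rcases hcmp {z | z ≤ b} (fun u v hvu hu => le_trans hvu hu) with h | h
    · exact le_antisymm hba (h haT) ▸ haT
    · exact h le_rfl
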